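/- arXiv:2304.08399 — 3 statements merged into one kernel-verified Lean document; each statement's English description precedes it below -/
import Mathlib

section
/- Let q : ℝⁿ → ℝ be a quadratic form such that q(y) > 0 whenever y is entrywise strictly positive. Then the following are equivalent: (1) for all y with all entries strictly positive and all x with non-negative entries, q(x,y)² ≥ q(x)q(y) with equality iff x is proportional to y; (2) for all y entrywise strictly positive and all x ∈ ℝⁿ, q(x,y)² ≥ q(x)q(y) with equality iff x is proportional to y; (3) for all y with q(y) > 0 and all x ∈ ℝⁿ, q(x,y)² ≥ q(x)q(y) with equality iff x is proportional to y; (4) q has signature (+,−,...,−). -/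
open QuadraticMap

/-- The symmetric bilinear form polarizing `Q`, i.e. `B x y` with `B x x = Q x`. -/
noncomputable def qbil {n : ℕ} (Q : QuadraticForm ℝ (Fin n → ℝ)) (x y : Fin n → ℝ) : ℝ :=
  QuadraticMap.polar Q x y / 2

/-- `Q` has signature `(+,−,...,−)`: it is equivalent to the quadratic form
`x₀² − x₁² − ⋯ − x_{n-1}²`. -/
def hasLorentzSignature {n : ℕ} (Q : QuadraticForm ℝ (Fin n → ℝ)) : Prop :=
  QuadraticMap.Equivalent Q
    (QuadraticMap.weightedSumSquares ℝ (fun i : Fin n => if (i : ℕ) = 0 then (1 : ℝ) else -1))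

section aux
variable {n : ℕ} (Q : QuadraticForm ℝ (Fin n → ℝ))

lemma qbil_self (x : Fin n → ℝ) : qbil Q x x = Q x := by
  rw [qbil, polar_self, nsmul_eq_mul]; ring

lemma qbil_comm (x y : Fin n → ℝ) : qbil Q x y = qbil Q y x := by
  rw [qbil, qbil, polar_comm]

lemma Q_add (x y : Fin n → ℝ) : Q (x + y) = Q x + Q y + 2 * qbil Q x y := by
  simp [qbil, QuadraticMap.polar]; ring

lemma Q_smul (a : ℝ) (x : Fin n → ℝ) : Q (a • x) = a ^ 2 * Q x := by
  rw [QuadraticMap.map_smul, smul_eq_mul]; ring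

lemma qbil_add_left (x x' y : Fin n → ℝ) :
    qbil Q (x + x') y = qbil Q x y + qbil Q x' y := by
  simp [qbil, polar_add_left]; ring

lemma qbil_smul_left (a : ℝ) (x y : Fin n → ℝ) :
    qbil Q (a • x) y = a * qbil Q x y := by
  simp [qbil, polar_smul_left]; ring

lemma qbil_expand (a b : ℝ) (u v w : Fin n → ℝ) :
    qbil Q (a • u + b • v) w = a * qbil Q u w + b * qbil Q v w := by
  rw [qbil_add_left, qbil_smul_left, qbil_smul_left]

lemma Q_expand (a b : ℝ) (u v : Fin n → ℝ) :
    Q (a • u + b • v) = a ^ 2 * Q u + 2 * a * b * qbil Q u v + b ^ 2 * Q v := by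
  rw [Q_add, Q_smul, Q_smul, qbil_smul_left, qbil_comm, qbil_smul_left, qbil_comm]; ring

lemma qbil_assoc (x y : Fin n → ℝ) : qbil Q x y = associated (R := ℝ) Q x y := by
  have h : (2 • (associatedHom ℝ) Q) x y = (polarBilin Q) x y := by
    rw [two_nsmul_associated]
  simp only [LinearMap.smul_apply, polarBilin_apply_apply, nsmul_eq_mul] at h
  rw [qbil, ← h]; push_cast; ring

lemma wss_reindex {m k : ℕ} (σ : Fin m ≃ Fin k) (w : Fin k → ℝ) :
    QuadraticMap.Equivalent (weightedSumSquares ℝ w)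
      (weightedSumSquares ℝ (w ∘ σ)) := by
  refine ⟨{ toLinearEquiv := LinearEquiv.funCongrLeft ℝ ℝ σ, map_app' := ?_ }⟩
  intro v
  simp only [weightedSumSquares_apply, smul_eq_mul]
  have h : ∀ i : Fin m, (LinearEquiv.funCongrLeft ℝ ℝ σ) v i = v (σ i) := fun i => rfl
  simp only [h, Function.comp_apply]
  exact Fintype.sum_equiv σ _ _ (fun i => rfl)

/-- Key negativity lemma: if `Q` has Lorentz signature, `Q y > 0`, and `z ⟂ y`,
then `Q z ≤ 0` with equality only at `z = 0`. -/
lemma lorentz_neg (hn : 0 < n)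
    (f : QuadraticMap.IsometryEquiv Q
      (weightedSumSquares ℝ (fun i : Fin n => if (i : ℕ) = 0 then (1 : ℝ) else -1)))
    (y : Fin n → ℝ) (hy : 0 < Q y) (z : Fin n → ℝ) (hz : qbil Q z y = 0) :
    Q z ≤ 0 ∧ (Q z = 0 → z = 0) := by
  set i0 : Fin n := ⟨0, hn⟩ with hi0
  have key : ∀ z : Fin n → ℝ, qbil Q z y = 0 → 0 ≤ Q z → z ≠ 0 → False := by
    intro z hz hQz hz0
    have hzy : ∀ c : ℝ, z = c • y → False := by
      intro c hc
      have : qbil Q z y = c * Q y := by rw [hc, qbil_smul_left, qbil_self]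
      rw [hz] at this
      have hc0 : c = 0 := by
        rcases mul_eq_zero.mp this.symm with h | h
        · exact h
        · exact absurd h (ne_of_gt hy)
      exact hz0 (by rw [hc, hc0, zero_smul])
    -- choose a,b not both zero with (f (a•y+b•z)) i0 = 0
    set u := f y i0 with hu
    set v := f z i0 with hv
    obtain ⟨a, b, hab, hw0⟩ : ∃ a b : ℝ, ¬(a = 0 ∧ b = 0) ∧ a * u + b * v = 0 := by
      by_cases huv : u = 0 ∧ v = 0
      · exact ⟨1, 0, by simp, by simp [huv.1, huv.2]⟩
      · exact ⟨v, -u, by rintro ⟨h1, h2⟩; exact huv ⟨by linarith [neg_eq_zero.mp h2], h1⟩,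
          by ring⟩
    set w : Fin n → ℝ := a • y + b • z with hwdef
    have hfw0 : f w i0 = 0 := by
      have : f w = a • f y + b • f z := by
        simp only [hwdef, map_add, _root_.map_smul]
      rw [this]
      simpa using hw0
    have hQw1 : Q w = a ^ 2 * Q y + b ^ 2 * Q z := by
      rw [hwdef, Q_expand, qbil_comm, hz]; ring
    have hQwpos : 0 ≤ Q w := by
      rw [hQw1]; positivity
    -- Q w ≤ 0 via coordinates
    have hQw2 : Q w = ∑ k : Fin n, (if (k : ℕ) = 0 then (1:ℝ) else -1) * (f w k * f w k) := by
      rw [← f.map_app w, weightedSumSquares_apply]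
      simp [smul_eq_mul]
    have hterm : ∀ k : Fin n, (if (k : ℕ) = 0 then (1:ℝ) else -1) * (f w k * f w k) ≤ 0 := by
      intro k
      by_cases hk : (k : ℕ) = 0
      · have : k = i0 := Fin.ext hk
        simp [hk, this, hfw0]
      · simp only [hk, if_false]
        nlinarith [mul_self_nonneg (f w k)]
    have hQwneg : Q w ≤ 0 := hQw2 ▸ Finset.sum_nonpos (fun k _ => hterm k)
    have hQweq : Q w = 0 := le_antisymm hQwneg hQwpos
    -- all coordinates of f w vanish
    have hfw : ∀ k : Fin n, f w k = 0 := by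
      have hall := (Finset.sum_eq_zero_iff_of_nonpos (fun k _ => hterm k)).mp
        (by rw [← hQw2]; exact hQweq)
      intro k
      by_cases hk : (k : ℕ) = 0
      · have : k = i0 := Fin.ext hk
        rw [this]; exact hfw0
      · have := hall k (Finset.mem_univ k)
        simp only [hk, if_false, neg_one_mul, neg_eq_zero] at this
        exact mul_self_eq_zero.mp this
    have hweq : w = 0 := by
      have : f w = 0 := funext hfw
      have h2 : f w = f 0 := by rw [this, map_zero]
      exact f.toLinearEquiv.injective h2
    -- contradiction
    by_cases hb : b = 0
    · have ha : a ≠ 0 := fun h => hab ⟨h, hb⟩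
      have hy0 : y = 0 := by
        have : a • y = 0 := by rw [hwdef, hb, zero_smul, add_zero] at hweq; exact hweq
        exact (smul_eq_zero.mp this).resolve_left ha
      rw [hy0] at hy; simp at hy
    · apply hzy (-a / b)
      have : b • z = -(a • y) := by
        rw [hwdef] at hweq
        linear_combination (norm := module) hweq
      have h3 : z = b⁻¹ • -(a • y) := by
        rw [← this, smul_smul, inv_mul_cancel₀ hb, one_smul]
      rw [h3]
      rw [smul_neg, smul_smul]
      rw [div_eq_mul_inv]
      module
  constructor
  · by_contra h
    push_neg at h
    have hz0 : z ≠ 0 := fun h0 => by rw [h0] at h; simp at h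
    exact key z hz (le_of_lt h) hz0
  · intro hQz
    by_contra hz0
    exact key z hz (le_of_eq hQz.symm) hz0

lemma wss_single {m : ℕ} (w : Fin m → ℝ) (i : Fin m) :
    weightedSumSquares ℝ w (Pi.single i 1 : Fin m → ℝ) = w i := by
  simp [weightedSumSquares_apply, Pi.single_apply, mul_ite, ite_mul]

lemma wss_single_add {m : ℕ} (w : Fin m → ℝ) (i j : Fin m) (hij : i ≠ j) :
    weightedSumSquares ℝ w ((Pi.single i 1 : Fin m → ℝ) + Pi.single j 1) = w i + w j := by
  simp only [weightedSumSquares_apply, Pi.add_apply, Pi.single_apply, smul_eq_mul]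
  have h : ∀ k : Fin m, w k * (((if k = i then (1:ℝ) else 0) + if k = j then 1 else 0) *
      ((if k = i then (1:ℝ) else 0) + if k = j then 1 else 0)) =
      (if k = i then w k else 0) + (if k = j then w k else 0) := by
    intro k
    by_cases h1 : k = i <;> by_cases h2 : k = j
    · exact absurd (h1.symm.trans h2) hij
    all_goals simp [h1, h2, hij, hij.symm]
  rw [Finset.sum_congr rfl (fun k _ => h k), Finset.sum_add_distrib]
  simp

lemma classify_pm (hsep : (associated (R := ℝ) Q).SeparatingLeft) :
    ∃ w : Fin n → ℝ, (∀ i, w i = -1 ∨ w i = 1) ∧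
      QuadraticMap.Equivalent Q (weightedSumSquares ℝ w) := by
  obtain ⟨w0, hw0pm, hw0equiv⟩ :=
    QuadraticForm.equivalent_one_neg_one_weighted_sum_squared Q hsep
  have hrank : Module.finrank ℝ (Fin n → ℝ) = n := Module.finrank_fin_fun ℝ
  refine ⟨w0 ∘ finCongr hrank.symm, fun i => hw0pm _, ?_⟩
  exact hw0equiv.trans (wss_reindex (finCongr hrank.symm) w0)

end aux

set_option maxHeartbeats 2000000 in
/-- For a quadratic form `q` on ℝⁿ with `q(y) > 0` for entrywise positive `y`, the four
conditions (1)–(4) of Lemma `hodge` are equivalent. -/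
theorem stmt_2 {n : ℕ} (Q : QuadraticForm ℝ (Fin n → ℝ))
    (hpos : ∀ y : Fin n → ℝ, (∀ i, 0 < y i) → 0 < Q y) :
    List.TFAE
      [ (∀ y : Fin n → ℝ, (∀ i, 0 < y i) → ∀ x : Fin n → ℝ, (∀ i, 0 ≤ x i) →
          (qbil Q x y) ^ 2 ≥ Q x * Q y ∧
            ((qbil Q x y) ^ 2 = Q x * Q y ↔ ∃ c : ℝ, x = c • y)),
        (∀ y : Fin n → ℝ, (∀ i, 0 < y i) → ∀ x : Fin n → ℝ,
          (qbil Q x y) ^ 2 ≥ Q x * Q y ∧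
            ((qbil Q x y) ^ 2 = Q x * Q y ↔ ∃ c : ℝ, x = c • y)),
        (∀ y : Fin n → ℝ, 0 < Q y → ∀ x : Fin n → ℝ,
          (qbil Q x y) ^ 2 ≥ Q x * Q y ∧
            ((qbil Q x y) ^ 2 = Q x * Q y ↔ ∃ c : ℝ, x = c • y)),
        hasLorentzSignature Q ] := by
  -- n > 0
  have hn : 0 < n := by
    rcases Nat.eq_zero_or_pos n with h | h
    · exfalso
      subst h
      have h1 := hpos 0 (fun i => i.elim0)
      rw [QuadraticMap.map_zero] at h1
      exact lt_irrefl _ h1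
    · exact h
  have hone : ∀ i : Fin n, (0:ℝ) < (1 : Fin n → ℝ) i := fun i => by norm_num
  have hQ1 : 0 < Q 1 := hpos 1 hone
  tfae_have 2 → 1 := by
    intro h2 y hy x _
    exact h2 y hy x
  tfae_have 1 → 2 := by
    intro h1 y hy x
    haveI : Nonempty (Fin n) := ⟨⟨0, hn⟩⟩
    set s : ℝ := Finset.univ.sup' Finset.univ_nonempty (fun i => -x i / y i) with hs
    have hxs : ∀ i, 0 ≤ (x + s • y) i := by
      intro i
      have hle : -x i / y i ≤ s := by
        rw [hs]
        exact Finset.le_sup' (fun i => -x i / y i) (Finset.mem_univ i)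
      have := (div_le_iff₀ (hy i)).mp hle
      simp only [Pi.add_apply, Pi.smul_apply, smul_eq_mul]
      linarith
    obtain ⟨hineq, heq⟩ := h1 y hy (x + s • y) hxs
    have hB : qbil Q (x + s • y) y = qbil Q x y + s * Q y := by
      rw [qbil_add_left, qbil_smul_left, qbil_self]
    have hQx : Q (x + s • y) = Q x + 2 * s * qbil Q x y + s ^ 2 * Q y := by
      rw [Q_add, Q_smul, qbil_comm, qbil_smul_left, qbil_comm]; ring
    have hkey : qbil Q (x + s • y) y ^ 2 - Q (x + s • y) * Q y
        = qbil Q x y ^ 2 - Q x * Q y := by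
      rw [hB, hQx]; ring
    constructor
    · have := hineq; rw [ge_iff_le, ← sub_nonneg] at this ⊢; linarith [hkey]
    · constructor
      · intro he
        have : qbil Q (x + s • y) y ^ 2 = Q (x + s • y) * Q y := by
          nlinarith [hkey]
        obtain ⟨c, hc⟩ := heq.mp this
        exact ⟨c - s, by rw [sub_smul, ← hc]; abel⟩
      · rintro ⟨c, rfl⟩
        have h1' : qbil Q (c • y) y = c * Q y := by rw [qbil_smul_left, qbil_self]
        rw [h1', Q_smul]; ring
  tfae_have 3 → 2 := by
    intro h3 y hy x
    exact h3 y (hpos y hy) x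
  tfae_have 4 → 3 := by
    intro h4 y hy x
    obtain ⟨f⟩ := h4
    set t : ℝ := qbil Q x y / Q y with ht
    set z : Fin n → ℝ := x - t • y with hzdef
    have hQy : Q y ≠ 0 := ne_of_gt hy
    have hxz : x = t • y + z := by rw [hzdef]; abel
    have hBz : qbil Q z y = 0 := by
      rw [hzdef, sub_eq_add_neg, qbil_add_left, ← neg_smul, qbil_smul_left, qbil_self, ht]
      field_simp
      ring
    obtain ⟨hzneg, hzzero⟩ := lorentz_neg Q hn f y hy z hBz
    have hBxy : qbil Q x y = t * Q y := by
      rw [hxz, qbil_add_left, qbil_smul_left, qbil_self, hBz, add_zero]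
    have hQx : Q x = t ^ 2 * Q y + Q z := by
      rw [hxz, Q_add, Q_smul, qbil_smul_left, qbil_comm, hBz]; ring
    have hkey : qbil Q x y ^ 2 - Q x * Q y = -(Q z * Q y) := by
      rw [hBxy, hQx]; ring
    constructor
    · rw [ge_iff_le, ← sub_nonneg, hkey]
      nlinarith
    · constructor
      · intro he
        have hQz : Q z = 0 := by
          have : Q z * Q y = 0 := by nlinarith [hkey]
          exact (mul_eq_zero.mp this).resolve_right hQy
        have := hzzero hQz
        exact ⟨t, by rw [hxz, this, add_zero]⟩
      · rintro ⟨c, rfl⟩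
        have h1' : qbil Q (c • y) y = c * Q y := by rw [qbil_smul_left, qbil_self]
        rw [h1', Q_smul]; ring
  tfae_have 2 → 4 := by
    intro h2
    -- nondegeneracy
    have hsep : (associated (R := ℝ) Q).SeparatingLeft := by
      intro x hx
      have hxy : qbil Q x 1 = 0 := by rw [qbil_assoc]; exact hx 1
      have hxx : Q x = 0 := by
        have := hx x
        rw [← qbil_assoc, qbil_self] at this
        exact this
      have heq : qbil Q x 1 ^ 2 = Q x * Q 1 := by rw [hxy, hxx]; ring
      obtain ⟨c, hc⟩ := (h2 1 hone x).2.mp heq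
      have : c * Q 1 = 0 := by rw [← qbil_self Q, ← qbil_smul_left, ← hc, hxy]
      have hc0 : c = 0 := (mul_eq_zero.mp this).resolve_right (ne_of_gt hQ1)
      rw [hc, hc0, zero_smul]
    obtain ⟨w, hwpm, hequiv⟩ := classify_pm Q hsep
    obtain ⟨f⟩ := hequiv
    -- at most one +1
    have hatmost : ∀ i j : Fin n, i ≠ j → w i = 1 → w j = 1 → False := by
      intro i j hij hwi hwj
      set p : Fin n → ℝ := Pi.single i 1 with hp
      set q : Fin n → ℝ := Pi.single j 1 with hq
      set u : Fin n → ℝ := f.symm p with hu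
      set v : Fin n → ℝ := f.symm q with hv
      have hfu : f u = p := f.toLinearEquiv.apply_symm_apply _
      have hfv : f v = q := f.toLinearEquiv.apply_symm_apply _
      have hQu : Q u = 1 := by rw [← f.map_app u, hfu, hp, wss_single]; exact hwi
      have hQv : Q v = 1 := by rw [← f.map_app v, hfv, hq, wss_single]; exact hwj
      have hQuv : Q (u + v) = 2 := by
        rw [← f.map_app (u + v), map_add, hfu, hfv, hp, hq, wss_single_add w i j hij,
          hwi, hwj]
        norm_num
      have hB : qbil Q u v = 0 := by
        have h := Q_add Q u v
        rw [hQu, hQv, hQuv] at h; linarith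
      have hQcomb : ∀ a b : ℝ, Q (a • u + b • v) = a ^ 2 + b ^ 2 := by
        intro a b; rw [Q_expand, hQu, hQv, hB]; ring
      -- choose a,b not both zero with qbil (a•u+b•v) 1 = 0
      obtain ⟨a, b, hab, horth⟩ : ∃ a b : ℝ, ¬(a = 0 ∧ b = 0) ∧
          a * qbil Q u 1 + b * qbil Q v 1 = 0 := by
        by_cases hu1 : qbil Q u 1 = 0
        · exact ⟨1, 0, by simp, by rw [hu1]; ring⟩
        · exact ⟨qbil Q v 1, -(qbil Q u 1), fun h => hu1 (by linarith [neg_eq_zero.mp h.2]),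
            by ring⟩
      have hx1 : qbil Q (a • u + b • v) 1 = 0 := by rw [qbil_expand]; exact horth
      have hle : Q (a • u + b • v) * Q 1 ≤ qbil Q (a • u + b • v) 1 ^ 2 :=
        (h2 1 hone (a • u + b • v)).1
      rw [hx1] at hle
      have hQab : Q (a • u + b • v) ≤ 0 := by
        nlinarith
      rw [hQcomb a b] at hQab
      have ha : a = 0 := by nlinarith [sq_nonneg a, sq_nonneg b]
      have hb : b = 0 := by nlinarith [sq_nonneg a, sq_nonneg b]
      exact hab ⟨ha, hb⟩
    -- at least one +1
    obtain ⟨i0, hi0⟩ : ∃ i : Fin n, w i = 1 := by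
      by_contra hno
      push_neg at hno
      have hall : ∀ i, w i = -1 := fun i => (hwpm i).resolve_right (hno i)
      have h := f.map_app 1
      rw [weightedSumSquares_apply] at h
      have hle : (0:ℝ) < ∑ k : Fin n, w k • (f 1 k * f 1 k) := h ▸ hQ1
      have : ∀ k : Fin n, w k • (f 1 k * f 1 k) ≤ 0 := by
        intro k
        rw [hall k, smul_eq_mul]
        nlinarith [mul_self_nonneg (f 1 k)]
      nlinarith [Finset.sum_nonpos (fun k (_ : k ∈ Finset.univ) => this k)]
    -- permute i0 to 0
    have htarget : (w ∘ (Equiv.swap (⟨0, hn⟩ : Fin n) i0))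
        = (fun i : Fin n => if (i : ℕ) = 0 then (1:ℝ) else -1) := by
      funext k
      simp only [Function.comp_apply]
      by_cases hk : k = (⟨0, hn⟩ : Fin n)
      · subst hk
        rw [Equiv.swap_apply_left, hi0, if_pos rfl]
      · have hcond : ¬((k : ℕ) = 0) := fun h => hk (Fin.ext h)
        rw [if_neg hcond]
        by_cases hki : k = i0
        · subst hki
          rw [Equiv.swap_apply_right]
          rcases hwpm (⟨0, hn⟩ : Fin n) with h | h
          · exact h
          · exact absurd hi0 (fun _ => hatmost (⟨0, hn⟩ : Fin n) k (fun he => hk he.symm) h hi0)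
        · rw [Equiv.swap_apply_of_ne_of_ne hk hki]
          rcases hwpm k with h | h
          · exact h
          · exact absurd hi0 (fun _ => hatmost k i0 hki h hi0)
    have hfinal := wss_reindex (Equiv.swap (⟨0, hn⟩ : Fin n) i0) w
    rw [htarget] at hfinal
    exact QuadraticMap.Equivalent.trans (⟨f⟩ : QuadraticMap.Equivalent Q _) hfinal
  tfae_finish
end

section
/- Let ∂ = Σ_α c_α ∂^α be a non-zero homogeneous constant-coefficient differential operator of degree d in n variables. Then for every m ≥ d, the induced linear map from the space of homogeneous real polynomials of degree m in n variables to the space of homogeneous polynomials of degree m−d is surjective. -/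
open MvPolynomial

variable {n : ℕ}

/-- The iterated partial derivative `∂^α = ∂₁^{α 1} ⋯ ∂ₙ^{α n}`. -/
noncomputable def pderivPow (α : Fin n →₀ ℕ) (f : MvPolynomial (Fin n) ℝ) :
    MvPolynomial (Fin n) ℝ :=
  (List.finRange n).foldr (fun i g => (pderiv i)^[α i] g) f

/-- The constant-coefficient differential operator `s(∂_{x_1},…,∂_{x_n})`. -/
noncomputable def diffOp (s f : MvPolynomial (Fin n) ℝ) : MvPolynomial (Fin n) ℝ :=
  ∑ α ∈ s.support, s.coeff α • pderivPow α f

lemma iterate_pderiv_monomial (i : Fin n) (k : ℕ) (β : Fin n →₀ ℕ) (c : ℝ) :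
    (pderiv i)^[k] (monomial β c) =
      monomial (β - Finsupp.single i k) (((β i).descFactorial k : ℝ) * c) := by
  induction k with
  | zero => simp
  | succ k ih =>
    rw [Function.iterate_succ_apply', ih, pderiv_monomial]
    have h1 : β - Finsupp.single i k - Finsupp.single i 1 = β - Finsupp.single i (k + 1) := by
      ext j
      simp only [Finsupp.tsub_apply, Finsupp.single_apply]
      split_ifs <;> omega
    have h2 : ((β - Finsupp.single i k) i : ℕ) = β i - k := by
      simp [Finsupp.tsub_apply]
    rw [h1, h2]
    congr 1
    rw [Nat.descFactorial_succ]
    push_cast [Nat.descFactorial_succ]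
    ring

lemma foldr_pderiv_aux (α β : Fin n →₀ ℕ) (c : ℝ) :
    ∀ l : List (Fin n), l.Nodup →
      l.foldr (fun i g => (pderiv i)^[α i] g) (monomial β c) =
        monomial (β - ∑ i ∈ l.toFinset, Finsupp.single i (α i))
          ((∏ i ∈ l.toFinset, (β i).descFactorial (α i) : ℕ) * c)
  | [], _ => by simp
  | i :: l, h => by
    obtain ⟨hi, hl⟩ := List.nodup_cons.mp h
    have hi' : i ∉ l.toFinset := by simpa using hi
    rw [List.foldr_cons, foldr_pderiv_aux α β c l hl, iterate_pderiv_monomial]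
    have happ : ((β - ∑ j ∈ l.toFinset, Finsupp.single j (α j)) i) = β i := by
      rw [Finsupp.tsub_apply]
      have : (∑ j ∈ l.toFinset, Finsupp.single j (α j)) i = 0 := by
        rw [Finsupp.finset_sum_apply]
        exact Finset.sum_eq_zero fun j hj =>
          Finsupp.single_eq_of_ne (by rintro rfl; exact hi' hj)
      omega
    rw [happ, List.toFinset_cons, Finset.sum_insert hi', Finset.prod_insert hi']
    congr 1
    · rw [tsub_tsub, add_comm]
    · push_cast; ring

lemma pderivPow_monomial (α β : Fin n →₀ ℕ) (c : ℝ) :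
    pderivPow α (monomial β c) =
      monomial (β - α) ((∏ i, (β i).descFactorial (α i) : ℕ) * c) := by
  rw [pderivPow, foldr_pderiv_aux α β c _ (List.nodup_finRange n)]
  have h1 : (List.finRange n).toFinset = Finset.univ := List.toFinset_finRange n
  rw [h1]
  congr 2
  ext j
  rw [Finsupp.tsub_apply, Finsupp.tsub_apply, Finsupp.finset_sum_apply]
  simp [Finsupp.single_apply]

/-- `pderivPow` as a linear map. -/
noncomputable def pderivPowL (α : Fin n →₀ ℕ) :
    MvPolynomial (Fin n) ℝ →ₗ[ℝ] MvPolynomial (Fin n) ℝ :=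
  (List.finRange n).foldr
    (fun i L => (((pderiv i : Derivation ℝ _ _).toLinearMap :
        Module.End ℝ (MvPolynomial (Fin n) ℝ)) ^ (α i)) ∘ₗ L) LinearMap.id

lemma pderivPowL_apply (α : Fin n →₀ ℕ) (f : MvPolynomial (Fin n) ℝ) :
    pderivPowL α f = pderivPow α f := by
  rw [pderivPowL, pderivPow]
  induction List.finRange n generalizing f with
  | nil => rfl
  | cons i l ih =>
    rw [List.foldr_cons, List.foldr_cons, LinearMap.comp_apply, Module.End.pow_apply, ih]
    rfl

lemma Nat.descFactorial_add' (a b c : ℕ) :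
    c.descFactorial (a + b) = (c - b).descFactorial a * c.descFactorial b := by
  induction a with
  | zero => simp
  | succ a ih =>
    have h : a + 1 + b = (a + b) + 1 := by omega
    rw [h, Nat.descFactorial_succ, ih, Nat.descFactorial_succ]
    have h' : c - (a + b) = c - b - a := by omega
    rw [h']; ring

lemma pderivPow_add (α β : Fin n →₀ ℕ) (f : MvPolynomial (Fin n) ℝ) :
    pderivPow (α + β) f = pderivPow α (pderivPow β f) := by
  have key : ∀ γ : Fin n →₀ ℕ, ∀ c : ℝ,
      pderivPow (α + β) (monomial γ c) = pderivPow α (pderivPow β (monomial γ c)) := by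
    intro γ c
    rw [pderivPow_monomial, pderivPow_monomial, pderivPow_monomial]
    have h1 : γ - β - α = γ - (α + β) := by
      rw [tsub_tsub, add_comm]
    have h2 : (∏ i, (γ i).descFactorial ((α + β) i) : ℕ) =
        (∏ i, ((γ - β) i).descFactorial (α i)) * ∏ i, (γ i).descFactorial (β i) := by
      rw [← Finset.prod_mul_distrib]
      refine Finset.prod_congr rfl fun i _ => ?_
      rw [Finsupp.add_apply, Finsupp.tsub_apply, Nat.descFactorial_add']
    rw [h1, h2]
    push_cast
    ring_nf
  have hsum : ∀ (δ : Fin n →₀ ℕ) (F : (Fin n →₀ ℕ) → MvPolynomial (Fin n) ℝ)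
      (S : Finset (Fin n →₀ ℕ)),
      pderivPow δ (∑ x ∈ S, F x) = ∑ x ∈ S, pderivPow δ (F x) := by
    intro δ F S
    rw [← pderivPowL_apply, map_sum]
    simp only [pderivPowL_apply]
  conv_lhs => rw [← support_sum_monomial_coeff f]
  conv_rhs => rw [← support_sum_monomial_coeff f]
  rw [hsum, hsum, hsum]
  exact Finset.sum_congr rfl fun γ _ => key γ _

/-- `diffOp` as a linear map in the second argument. -/
noncomputable def diffOpL (s : MvPolynomial (Fin n) ℝ) :
    MvPolynomial (Fin n) ℝ →ₗ[ℝ] MvPolynomial (Fin n) ℝ :=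
  ∑ α ∈ s.support, s.coeff α • pderivPowL α

lemma diffOpL_apply (s f : MvPolynomial (Fin n) ℝ) : diffOpL s f = diffOp s f := by
  rw [diffOpL, diffOp]
  simp [pderivPowL_apply]

lemma diffOpL_monomial (α : Fin n →₀ ℕ) (c : ℝ) :
    diffOpL (monomial α c) = c • pderivPowL α := by
  rcases eq_or_ne c 0 with rfl | hc
  · simp [diffOpL]
  · rw [diffOpL]
    rw [show ((monomial α) c).support = {α} from by simp [support_monomial, hc]]
    simp [coeff_monomial]

lemma diffOpL_add (s t : MvPolynomial (Fin n) ℝ) :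
    diffOpL (s + t) = diffOpL s + diffOpL t := by
  have hrep : ∀ u : MvPolynomial (Fin n) ℝ,
      diffOpL u = Finsupp.sum (AddMonoidAlgebra.coeff u) fun α c => c • pderivPowL α := fun u => rfl
  rw [hrep, hrep, hrep, AddMonoidAlgebra.coeff_add, Finsupp.sum_add_index]
  · intro α _; simp
  · intro α _ c₁ c₂; rw [add_smul]

lemma pderivPowL_add (α β : Fin n →₀ ℕ) :
    pderivPowL (α + β) = pderivPowL α ∘ₗ pderivPowL β := by
  apply LinearMap.ext
  intro f
  rw [LinearMap.comp_apply, pderivPowL_apply, pderivPowL_apply, pderivPowL_apply,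
    pderivPow_add]

lemma diffOpL_mul (s t : MvPolynomial (Fin n) ℝ) :
    diffOpL (s * t) = diffOpL s ∘ₗ diffOpL t := by
  induction s using MvPolynomial.induction_on' with
  | add p q hp hq => rw [add_mul, diffOpL_add, diffOpL_add, hp, hq, LinearMap.add_comp]
  | monomial α a =>
    induction t using MvPolynomial.induction_on' with
    | add p q hp hq => rw [mul_add, diffOpL_add, diffOpL_add, hp, hq, LinearMap.comp_add]
    | monomial β b =>
      rw [monomial_mul, diffOpL_monomial, diffOpL_monomial, diffOpL_monomial,
        pderivPowL_add, mul_smul, LinearMap.smul_comp, LinearMap.comp_smul]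

lemma coeff_zero_pderivPow (α : Fin n →₀ ℕ) (f : MvPolynomial (Fin n) ℝ)
    (hα : α ∈ f.support) :
    coeff 0 (pderivPow α f) = (∏ i, (α i).factorial : ℕ) * f.coeff α := by
  conv_lhs => rw [← support_sum_monomial_coeff f, ← pderivPowL_apply, map_sum]
  simp only [pderivPowL_apply, pderivPow_monomial]
  rw [coeff_sum]
  simp only [coeff_monomial]
  have hterm : ∀ β ∈ f.support,
      (if β - α = 0 then ((∏ i, (β i).descFactorial (α i) : ℕ) : ℝ) * f.coeff β else 0) =
      (if β = α then ((∏ i, (α i).factorial : ℕ) : ℝ) * f.coeff α else 0) := by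
    intro β _
    rcases eq_or_ne β α with rfl | hne
    · simp [Nat.descFactorial_self]
    · rw [if_neg hne]
      split_ifs with h
      · have hle : ∀ i, β i ≤ α i := by
          intro i
          have := congrArg (fun γ : Fin n →₀ ℕ => γ i) h
          simp only [Finsupp.tsub_apply, Finsupp.coe_zero, Pi.zero_apply] at this
          omega
        obtain ⟨i, hi⟩ : ∃ i, β i < α i := by
          by_contra hc
          push_neg at hc
          exact hne (Finsupp.ext fun i => le_antisymm (hle i) (hc i))
        have : (∏ i, (β i).descFactorial (α i)) = 0 :=
          Finset.prod_eq_zero (Finset.mem_univ i)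
            (Nat.descFactorial_eq_zero_iff_lt.mpr hi)
        simp [this]
      · rfl
  have hcongr := Finset.sum_congr rfl hterm
  rw [hcongr, Finset.sum_ite_eq' f.support α, if_pos hα]

lemma coeff_zero_diffOp_self_pos (f : MvPolynomial (Fin n) ℝ) (hf : f ≠ 0) :
    0 < coeff 0 (diffOp f f) := by
  rw [diffOp, coeff_sum]
  have h : ∀ α ∈ f.support,
      coeff 0 (f.coeff α • pderivPow α f) =
        (∏ i, (α i).factorial : ℕ) * (f.coeff α) ^ 2 := by
    intro α hα
    rw [coeff_smul, coeff_zero_pderivPow α f hα, smul_eq_mul]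
    ring
  rw [Finset.sum_congr rfl h]
  apply Finset.sum_pos
  · intro α hα
    have h1 : (0:ℝ) < (∏ i, (α i).factorial : ℕ) := by positivity
    have h2 : f.coeff α ≠ 0 := mem_support_iff.mp hα
    positivity
  · exact support_nonempty.mpr hf

lemma pderivPow_isHomogeneous {f : MvPolynomial (Fin n) ℝ} {m : ℕ} (hf : f.IsHomogeneous m)
    {α : Fin n →₀ ℕ} {k : ℕ} (hα : α.degree = k) :
    (pderivPow α f).IsHomogeneous (m - k) := by
  rw [← mem_homogeneousSubmodule, ← support_sum_monomial_coeff f, ← pderivPowL_apply, map_sum]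
  apply Submodule.sum_mem
  intro β hβ
  rw [pderivPowL_apply, pderivPow_monomial, mem_homogeneousSubmodule]
  rcases eq_or_ne (∏ i, (β i).descFactorial (α i)) 0 with hD | hD
  · rw [hD]
    norm_num
    exact isWeightedHomogeneous_zero ℝ _ _
  · apply isHomogeneous_monomial
    have hle : α ≤ β := by
      rw [Finsupp.le_def]
      intro i
      by_contra hlt
      exact hD (Finset.prod_eq_zero (Finset.mem_univ i)
        (Nat.descFactorial_eq_zero_iff_lt.mpr (by omega)))
    have hβdeg : β.degree = m := by
      have h := hf (mem_support_iff.mp hβ)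
      rwa [Finsupp.degree_eq_weight_one]
    have hsum : (β - α).degree + α.degree = β.degree := by
      rw [Finsupp.degree_eq_weight_one, ← map_add, tsub_add_cancel_of_le hle]
    omega

lemma diffOp_isHomogeneous {s f : MvPolynomial (Fin n) ℝ} {d m : ℕ}
    (hs : s.IsHomogeneous d) (hf : f.IsHomogeneous m) :
    (diffOp s f).IsHomogeneous (m - d) := by
  rw [← mem_homogeneousSubmodule, diffOp]
  apply Submodule.sum_mem
  intro α hα
  apply Submodule.smul_mem
  rw [mem_homogeneousSubmodule]
  refine pderivPow_isHomogeneous hf ?_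
  have h := hs (mem_support_iff.mp hα)
  rwa [Finsupp.degree_eq_weight_one]

lemma homogeneousSubmodule_finiteDimensional (k : ℕ) :
    FiniteDimensional ℝ (homogeneousSubmodule (Fin n) ℝ k) := by
  have hle : homogeneousSubmodule (Fin n) ℝ k ≤ restrictTotalDegree (Fin n) ℝ k := by
    intro p hp
    rw [mem_restrictTotalDegree]
    exact ((mem_homogeneousSubmodule _ _).mp hp).totalDegree_le
  exact Submodule.finiteDimensional_of_le hle

/-- A non-zero homogeneous constant-coefficient differential operator of degree `d`
maps homogeneous polynomials of degree `m ≥ d` onto homogeneous polynomials of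
degree `m − d` surjectively. -/
theorem stmt_6 (s : MvPolynomial (Fin n) ℝ) (d m : ℕ)
    (hs : s ≠ 0) (hhom : s.IsHomogeneous d) (hm : d ≤ m) :
    ∀ g : MvPolynomial (Fin n) ℝ, g.IsHomogeneous (m - d) →
      ∃ f : MvPolynomial (Fin n) ℝ, f.IsHomogeneous m ∧ diffOp s f = g := by
  intro g hg
  haveI := homogeneousSubmodule_finiteDimensional (n := n) (m - d)
  -- T : H_m → H_{m-d}, restriction of diffOpL s
  have hT : ∀ f ∈ homogeneousSubmodule (Fin n) ℝ m,
      diffOpL s f ∈ homogeneousSubmodule (Fin n) ℝ (m - d) := by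
    intro f hf
    rw [mem_homogeneousSubmodule] at hf ⊢
    rw [diffOpL_apply]
    exact diffOp_isHomogeneous hhom hf
  let T := (diffOpL s).restrict hT
  -- S : H_{m-d} → H_m, multiplication by s
  have hS : ∀ f ∈ homogeneousSubmodule (Fin n) ℝ (m - d),
      (LinearMap.mulLeft ℝ s) f ∈ homogeneousSubmodule (Fin n) ℝ m := by
    intro f hf
    rw [mem_homogeneousSubmodule] at hf ⊢
    have := hhom.mul hf
    rwa [Nat.add_sub_cancel' hm] at this
  let S := (LinearMap.mulLeft ℝ s).restrict hS
  -- T ∘ S is injective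
  have hinj : Function.Injective (T ∘ₗ S) := by
    rw [← LinearMap.ker_eq_bot, LinearMap.ker_eq_bot']
    intro x hx
    by_contra hx0
    have hxval : (x : MvPolynomial (Fin n) ℝ) ≠ 0 := by
      simpa [Submodule.coe_eq_zero] using hx0
    have hsx : s * (x : MvPolynomial (Fin n) ℝ) ≠ 0 := mul_ne_zero hs hxval
    have hval : diffOpL s (s * (x : MvPolynomial (Fin n) ℝ)) = 0 := by
      have := congrArg Subtype.val hx
      simpa [T, S, LinearMap.restrict_apply] using this
    have hzero : diffOp ((x : MvPolynomial (Fin n) ℝ) * s) (s * (x : MvPolynomial (Fin n) ℝ))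
        = 0 := by
      rw [← diffOpL_apply, diffOpL_mul, LinearMap.comp_apply, hval, map_zero]
    rw [mul_comm (x : MvPolynomial (Fin n) ℝ) s] at hzero
    have hpos := coeff_zero_diffOp_self_pos (s * (x : MvPolynomial (Fin n) ℝ)) hsx
    rw [hzero] at hpos
    simp at hpos
  have hsurj : Function.Surjective (T ∘ₗ S) := LinearMap.injective_iff_surjective.mp hinj
  obtain ⟨w, hw⟩ := hsurj ⟨g, (mem_homogeneousSubmodule _ _).mpr hg⟩
  refine ⟨((S w : homogeneousSubmodule (Fin n) ℝ m) : MvPolynomial (Fin n) ℝ),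
    (mem_homogeneousSubmodule _ _).mp (S w).2, ?_⟩
  have := congrArg Subtype.val hw
  simpa [T, S, LinearMap.restrict_apply, diffOpL_apply] using this
end

section
/- If f and g are Lorentzian polynomials in ℝ[x_1,...,x_n], then their truncations f_{≤κ} and f_{≥κ} are Lorentzian for any κ ∈ ℕⁿ. -/
open MvPolynomial

variable {n : ℕ}

/-- A real matrix has at most one positive eigenvalue (counted with multiplicity). -/
def AtMostOnePos {m : ℕ} (A : Matrix (Fin m) (Fin m) ℝ) : Prop :=
  ∀ hA : A.IsHermitian, (Finset.univ.filter fun i => 0 < hA.eigenvalues i).card ≤ 1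

/-- The (constant) Hessian matrix of a polynomial, representing it as a quadratic form
when it is quadratic. -/
noncomputable def hessian (f : MvPolynomial (Fin n) ℝ) : Matrix (Fin n) (Fin n) ℝ :=
  fun i j => MvPolynomial.coeff 0 (pderiv i (pderiv j f))

/-- M-convexity of a set of multi-indices. -/
def MConvexSupp (C : Set (Fin n →₀ ℕ)) : Prop :=
  ∀ α ∈ C, ∀ β ∈ C, ∀ j : Fin n, β j < α j →
    ∃ k : Fin n, α k < β k ∧ α - Finsupp.single j 1 + Finsupp.single k 1 ∈ C

/-- `f` is Lorentzian of degree `d`: homogeneous of degree `d` with non-negative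
coefficients, and if `d ≥ 2`, its support is M-convex and every `(d−2)`-fold partial
derivative is a quadratic form with at most one positive eigenvalue. -/
def Lorentzian (d : ℕ) (f : MvPolynomial (Fin n) ℝ) : Prop :=
  f.IsHomogeneous d ∧ (∀ α, 0 ≤ f.coeff α) ∧
  (2 ≤ d → MConvexSupp {α | f.coeff α ≠ 0} ∧
    ∀ α : Fin n →₀ ℕ, (α.sum fun _ k => k) = d - 2 →
      AtMostOnePos (hessian (pderivPow α f)))

/-- `f` is Lorentzian (of some degree). -/
def IsLorentzian (f : MvPolynomial (Fin n) ℝ) : Prop := ∃ d, Lorentzian d f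

/-- Lower truncation `f_{≤κ} = Σ_{α ≤ κ} λ_α x^α`. -/
noncomputable def truncLE (κ : Fin n →₀ ℕ) (f : MvPolynomial (Fin n) ℝ) :
    MvPolynomial (Fin n) ℝ :=
  ∑ β ∈ f.support.filter (· ≤ κ), monomial β (f.coeff β)

/-- Upper truncation `f_{≥κ} = Σ_{α ≥ κ} λ_α x^α`. -/
noncomputable def truncGE (κ : Fin n →₀ ℕ) (f : MvPolynomial (Fin n) ℝ) :
    MvPolynomial (Fin n) ℝ :=
  ∑ β ∈ f.support.filter (κ ≤ ·), monomial β (f.coeff β)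


open Matrix

section Aux

/-! ### Coefficients of iterated partial derivatives -/

lemma coeff_pderiv (i : Fin n) (g : MvPolynomial (Fin n) ℝ) (β : Fin n →₀ ℕ) :
    coeff β (pderiv i g) = (β i + 1 : ℕ) * coeff (β + Finsupp.single i 1) g := by
  induction g using MvPolynomial.induction_on' with
  | add p q hp hq => simp [hp, hq, mul_add]
  | monomial s a =>
    rw [pderiv_monomial]
    simp only [coeff_monomial]
    by_cases h : s = β + Finsupp.single i 1
    · subst h
      rw [if_pos (add_tsub_cancel_right _ _), if_pos rfl]
      simp [mul_comm]
    · rw [if_neg h, mul_zero]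
      rcases Nat.eq_zero_or_pos (s i) with h0 | h0
      · split <;> simp [h0]
      · rw [if_neg]
        intro hc
        apply h
        ext k
        have := congrArg (fun t => t k) hc
        simp only [Finsupp.tsub_apply, Finsupp.add_apply] at this ⊢
        rcases eq_or_ne k i with rfl | hk
        · simp only [Finsupp.single_eq_same] at this ⊢; omega
        · simp only [Finsupp.single_apply, if_neg (Ne.symm hk)] at this ⊢; omega

lemma coeff_pderiv_iterate (i : Fin n) (m : ℕ) (g : MvPolynomial (Fin n) ℝ) (β : Fin n →₀ ℕ) :
    coeff β ((pderiv i)^[m] g) =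
      (∏ t ∈ Finset.range m, (β i + 1 + t : ℝ)) * coeff (β + Finsupp.single i m) g := by
  induction m generalizing g with
  | zero => simp
  | succ m ih =>
    rw [Function.iterate_succ_apply, ih, coeff_pderiv, Finset.prod_range_succ]
    have h1 : (β + Finsupp.single i m) i = β i + m := by
      simp [Finsupp.add_apply]
    have h2 : β + Finsupp.single i m + Finsupp.single i 1 = β + Finsupp.single i (m + 1) := by
      rw [add_assoc, ← Finsupp.single_add]
    rw [h1, h2]
    push_cast
    ring

lemma coeff_foldr (α : Fin n →₀ ℕ) (l : List (Fin n)) (hl : l.Nodup)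
    (g : MvPolynomial (Fin n) ℝ) (β : Fin n →₀ ℕ) :
    coeff β (l.foldr (fun i h => (pderiv i)^[α i] h) g) =
      (l.map fun i => ∏ t ∈ Finset.range (α i), (β i + 1 + t : ℝ)).prod *
        coeff (β + (l.map fun i => Finsupp.single i (α i)).sum) g := by
  induction l generalizing β with
  | nil => simp
  | cons i l ih =>
    simp only [List.foldr_cons, List.map_cons, List.prod_cons, List.sum_cons]
    rw [coeff_pderiv_iterate, ih hl.of_cons]
    have hmap : (l.map fun j => ∏ t ∈ Finset.range (α j),
        ((β + Finsupp.single i (α i)) j + 1 + t : ℝ)) =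
        (l.map fun j => ∏ t ∈ Finset.range (α j), (β j + 1 + t : ℝ)) := by
      apply List.map_congr_left
      intro j hj
      have hij : i ≠ j := fun h => (List.nodup_cons.1 hl).1 (h ▸ hj)
      simp [Finsupp.add_apply, Finsupp.single_apply, hij]
    rw [hmap, add_assoc]
    ring

lemma sum_single_finRange (α : Fin n →₀ ℕ) :
    ((List.finRange n).map fun i => Finsupp.single i (α i)).sum = α := by
  ext k
  rw [← Finsupp.applyAddHom_apply, map_list_sum, List.map_map]
  have : (List.finRange n).map ((Finsupp.applyAddHom k) ∘ fun i => Finsupp.single i (α i)) =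
      (List.finRange n).map fun i => if i = k then α i else 0 := by
    apply List.map_congr_left
    intro j _
    simp [Finsupp.single_apply]
  rw [this, ← List.ofFn_eq_map, List.sum_ofFn]
  simp

lemma coeff_pderivPow (α : Fin n →₀ ℕ) (g : MvPolynomial (Fin n) ℝ) (β : Fin n →₀ ℕ) :
    coeff β (pderivPow α g) =
      ((List.finRange n).map fun i => ∏ t ∈ Finset.range (α i), (β i + 1 + t : ℝ)).prod *
        coeff (β + α) g := by
  rw [pderivPow, coeff_foldr α _ (List.nodup_finRange n), sum_single_finRange]

lemma hessian_pderivPow (α : Fin n →₀ ℕ) (i j : Fin n) :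
    ∃ c : ℝ, 0 < c ∧ ∀ g : MvPolynomial (Fin n) ℝ,
      hessian (pderivPow α g) i j =
        c * coeff (α + Finsupp.single i 1 + Finsupp.single j 1) g := by
  refine ⟨((Finsupp.single i 1 : Fin n →₀ ℕ) j + 1 : ℕ) *
    ((List.finRange n).map fun k => ∏ t ∈ Finset.range (α k),
      ((Finsupp.single i 1 + Finsupp.single j 1 : Fin n →₀ ℕ) k + 1 + t : ℝ)).prod, ?_, ?_⟩
  · apply mul_pos
    · positivity
    · apply List.prod_pos
      intro a ha
      simp only [List.mem_map] at ha
      obtain ⟨k, _, rfl⟩ := ha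
      apply Finset.prod_pos
      intro t _
      positivity
  · intro g
    rw [hessian]
    rw [coeff_pderiv, coeff_pderiv, zero_add, coeff_pderivPow]
    have h0 : ((0 : Fin n →₀ ℕ) i + 1 : ℕ) = 1 := by simp
    rw [h0]
    have : Finsupp.single i 1 + Finsupp.single j 1 + α
        = α + Finsupp.single i 1 + Finsupp.single j 1 := by
      rw [add_comm, ← add_assoc]
    rw [this]
    push_cast
    ring

lemma hessian_isHermitian (h : MvPolynomial (Fin n) ℝ) : (hessian h).IsHermitian := by
  apply Matrix.IsHermitian.ext
  intro i j
  simp only [hessian, Matrix.conjTranspose_apply, RCLike.star_def, starRingEnd_apply,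
    star_trivial]
  rw [coeff_pderiv, coeff_pderiv, coeff_pderiv, coeff_pderiv, zero_add, zero_add]
  rw [add_comm (Finsupp.single j 1)]
  congr 2
  simp [Finsupp.single_apply, eq_comm]

/-! ### Linear algebra: at most one positive eigenvalue -/

lemma quad_expand {m : ℕ} {A : Matrix (Fin m) (Fin m) ℝ} (hA : A.IsHermitian) (v : Fin m → ℝ) :
    v ⬝ᵥ A *ᵥ v = ∑ i, hA.eigenvalues i * ((⇑(hA.eigenvectorBasis i) : Fin m → ℝ) ⬝ᵥ v)^2 := by
  set U := (hA.eigenvectorUnitary : Matrix (Fin m) (Fin m) ℝ) with hU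
  set B : Fin m → Fin m → ℝ := fun i => ⇑(hA.eigenvectorBasis i) with hB
  have hs : A = U * Matrix.diagonal hA.eigenvalues * star U := by
    have := hA.spectral_theorem
    simpa [Function.comp] using this
  have entry : ∀ k j, (U * Matrix.diagonal hA.eigenvalues * star U) k j
      = ∑ i, hA.eigenvalues i * (B i k * B i j) := by
    intro k j
    rw [Matrix.mul_apply]
    apply Finset.sum_congr rfl
    intro i _
    rw [Matrix.mul_diagonal, Matrix.star_apply, star_trivial]
    simp only [hU, Matrix.IsHermitian.eigenvectorUnitary_apply, hB]
    ring
  conv_lhs => rw [hs]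
  simp only [dotProduct, Matrix.mulVec, dotProduct]
  calc ∑ k, v k * ∑ j, (U * Matrix.diagonal hA.eigenvalues * star U) k j * v j
      = ∑ k, ∑ i, ∑ j, v k * (hA.eigenvalues i * (B i k * B i j)) * v j := by
        apply Finset.sum_congr rfl; intro k _
        rw [Finset.mul_sum, Finset.sum_comm]
        apply Finset.sum_congr rfl; intro j _
        rw [entry, Finset.sum_mul, Finset.mul_sum]
        apply Finset.sum_congr rfl; intro i _
        ring
    _ = ∑ i, ∑ k, ∑ j, v k * (hA.eigenvalues i * (B i k * B i j)) * v j := Finset.sum_comm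
    _ = ∑ i, hA.eigenvalues i * (∑ k, B i k * v k)^2 := by
        apply Finset.sum_congr rfl; intro i _
        rw [sq, Finset.sum_mul_sum, Finset.mul_sum]
        apply Finset.sum_congr rfl; intro k _
        rw [Finset.mul_sum]
        apply Finset.sum_congr rfl; intro j _
        ring
    _ = _ := rfl

lemma orth_dot {m : ℕ} {A : Matrix (Fin m) (Fin m) ℝ} (hA : A.IsHermitian) (k l : Fin m) :
    (⇑(hA.eigenvectorBasis k) : Fin m → ℝ) ⬝ᵥ (⇑(hA.eigenvectorBasis l) : Fin m → ℝ)
      = if k = l then 1 else 0 := by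
  have h := hA.eigenvectorBasis.orthonormal
  rw [orthonormal_iff_ite] at h
  rw [← h k l, PiLp.inner_apply]
  simp [dotProduct, mul_comm]

/-- There is a vector whose orthogonal complement is nonpositive for the quadratic form. -/
def KV {m : ℕ} (A : Matrix (Fin m) (Fin m) ℝ) : Prop :=
  ∃ w : Fin m → ℝ, ∀ v : Fin m → ℝ, w ⬝ᵥ v = 0 → v ⬝ᵥ A *ᵥ v ≤ 0

lemma atMostOnePos_of_KV {m : ℕ} {A : Matrix (Fin m) (Fin m) ℝ} (kv : KV A) :
    AtMostOnePos A := by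
  intro hA
  by_contra hcard
  push_neg at hcard
  obtain ⟨i, hi, j, hj, hij⟩ := Finset.one_lt_card.1 hcard
  rw [Finset.mem_filter] at hi hj
  obtain ⟨w, hw⟩ := kv
  set B : Fin m → Fin m → ℝ := fun i => ⇑(hA.eigenvectorBasis i) with hB
  have key : ∀ a b : ℝ, ¬(a = 0 ∧ b = 0) → w ⬝ᵥ (a • B i + b • B j) = 0 → False := by
    intro a b hab h0
    have hq := hw _ h0
    rw [quad_expand hA] at hq
    have hexp : ∀ k, B k ⬝ᵥ (a • B i + b • B j)
        = a * (if k = i then 1 else 0) + b * (if k = j then 1 else 0) := by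
      intro k
      rw [dotProduct_add, dotProduct_smul, dotProduct_smul, orth_dot hA k i, orth_dot hA k j]
      simp
    have : ∑ k, hA.eigenvalues k * (B k ⬝ᵥ (a • B i + b • B j))^2
        = hA.eigenvalues i * a^2 + hA.eigenvalues j * b^2 := by
      have : ∀ k ∈ Finset.univ, hA.eigenvalues k * (B k ⬝ᵥ (a • B i + b • B j))^2
          = (if k = i then hA.eigenvalues i * a^2 else 0)
            + (if k = j then hA.eigenvalues j * b^2 else 0) := by
        intro k _
        rw [hexp k]
        rcases eq_or_ne k i with rfl | hki
        · rw [if_pos rfl, if_neg hij, if_pos rfl, if_neg hij]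
          ring
        · rcases eq_or_ne k j with rfl | hkj
          · rw [if_neg hki, if_pos rfl, if_neg hki, if_pos rfl]; ring
          · rw [if_neg hki, if_neg hkj, if_neg hki, if_neg hkj]; ring
      rw [Finset.sum_congr rfl this, Finset.sum_add_distrib,
        Finset.sum_ite_eq' Finset.univ i, Finset.sum_ite_eq' Finset.univ j]
      simp
    rw [this] at hq
    have ha2 : 0 ≤ hA.eigenvalues i * a^2 := mul_nonneg hi.2.le (sq_nonneg a)
    have hb2 : 0 ≤ hA.eigenvalues j * b^2 := mul_nonneg hj.2.le (sq_nonneg b)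
    rcases not_and_or.1 hab with ha | hb
    · have : 0 < hA.eigenvalues i * a^2 := mul_pos hi.2 (sq_pos_iff.mpr ha)
      linarith
    · have : 0 < hA.eigenvalues j * b^2 := mul_pos hj.2 (sq_pos_iff.mpr hb)
      linarith
  by_cases hwx : w ⬝ᵥ B i = 0 ∧ w ⬝ᵥ B j = 0
  · apply key 1 0 (by norm_num)
    rw [dotProduct_add, dotProduct_smul, dotProduct_smul, hwx.1, hwx.2]
    simp
  · refine key (w ⬝ᵥ B j) (-(w ⬝ᵥ B i)) ?_ ?_
    · rintro ⟨h1, h2⟩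
      exact hwx ⟨by linarith [neg_eq_zero.1 h2], h1⟩
    · rw [dotProduct_add, dotProduct_smul, dotProduct_smul]
      simp only [smul_eq_mul]
      ring

lemma KV_of_atMostOnePos {m : ℕ} {A : Matrix (Fin m) (Fin m) ℝ} (hA : A.IsHermitian)
    (h1 : AtMostOnePos A) : KV A := by
  have hc := h1 hA
  by_cases hex : ∃ i0, 0 < hA.eigenvalues i0
  · obtain ⟨i0, hi0⟩ := hex
    refine ⟨⇑(hA.eigenvectorBasis i0), fun v hv => ?_⟩
    rw [quad_expand hA]
    apply Finset.sum_nonpos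
    intro k _
    rcases eq_or_ne k i0 with rfl | hk
    · rw [hv]
      simp
    · have hk' : hA.eigenvalues k ≤ 0 := by
        by_contra hpos
        push_neg at hpos
        have hsub : ({k, i0} : Finset (Fin m)) ⊆
            Finset.univ.filter fun i => 0 < hA.eigenvalues i := by
          intro x hx
          rw [Finset.mem_insert, Finset.mem_singleton] at hx
          rcases hx with rfl | rfl <;> simp [hpos, hi0]
        have := Finset.card_le_card hsub
        rw [Finset.card_pair hk] at this
        omega
      exact mul_nonpos_iff.mpr (Or.inr ⟨hk', sq_nonneg _⟩)
  · push_neg at hex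
    refine ⟨0, fun v _ => ?_⟩
    rw [quad_expand hA]
    apply Finset.sum_nonpos
    intro k _
    exact mul_nonpos_iff.mpr (Or.inr ⟨hex k, sq_nonneg _⟩)

lemma quad_sum {m : ℕ} (M : Matrix (Fin m) (Fin m) ℝ) (v : Fin m → ℝ) :
    v ⬝ᵥ M *ᵥ v = ∑ i, ∑ j, M i j * (v i * v j) := by
  simp only [dotProduct, mulVec, Finset.mul_sum]
  apply Finset.sum_congr rfl; intro i _
  apply Finset.sum_congr rfl; intro j _
  ring

lemma apply_add_single_single (α : Fin n →₀ ℕ) (i j k : Fin n) :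
    (α + Finsupp.single i 1 + Finsupp.single j 1 : Fin n →₀ ℕ) k
      = α k + (if i = k then 1 else 0) + (if j = k then 1 else 0) := by
  simp only [Finsupp.add_apply, Finsupp.single_apply]

lemma KV_truncLE_mat {α κ : Fin n →₀ ℕ} {H H' : Matrix (Fin n) (Fin n) ℝ}
    (hrel : ∀ i j, H' i j
      = if α + Finsupp.single i 1 + Finsupp.single j 1 ≤ κ then H i j else 0)
    (hdiag : ∀ i, 0 ≤ H i i) (hH : KV H) : KV H' := by
  by_cases hak : α ≤ κ
  · obtain ⟨w, hw⟩ := hH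
    refine ⟨fun i => if α i + 1 ≤ κ i then w i else 0, fun v hv => ?_⟩
    set u : Fin n → ℝ := fun i => if α i + 1 ≤ κ i then v i else 0 with hu
    have hwu : w ⬝ᵥ u = 0 := by
      rw [← hv]
      apply Finset.sum_congr rfl
      intro i _
      by_cases h : α i + 1 ≤ κ i <;> simp only [hu, h, ↓reduceIte, mul_zero, zero_mul]
    have hq := hw u hwu
    rw [quad_sum] at hq ⊢
    refine le_trans (Finset.sum_le_sum fun i _ => Finset.sum_le_sum fun j _ => ?_) hq
    by_cases hi : α i + 1 ≤ κ i
    · by_cases hj : α j + 1 ≤ κ j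
      · rcases eq_or_ne i j with rfl | hij
        · have huv : u i = v i := by simp only [hu, hi, ↓reduceIte]
          rw [huv, hrel]
          split
          · exact le_refl _
          · rw [zero_mul]
            exact mul_nonneg (hdiag i) (mul_self_nonneg _)
        · have hcond : α + Finsupp.single i 1 + Finsupp.single j 1 ≤ κ := by
            rw [Finsupp.le_def]
            intro k
            rw [apply_add_single_single]
            have hk := Finsupp.le_def.1 hak k
            by_cases hik : i = k
            · subst hik
              rw [if_pos rfl, if_neg (fun h => hij h.symm)]
              omega
            · by_cases hjk : j = k
              · subst hjk
                rw [if_neg hik, if_pos rfl]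
                omega
              · rw [if_neg hik, if_neg hjk]
                omega
          rw [hrel, if_pos hcond]
          have : u i = v i := by simp only [hu, hi, ↓reduceIte]
          have huj : u j = v j := by simp only [hu, hj, ↓reduceIte]
          rw [this, huj]
      · have hcond : ¬(α + Finsupp.single i 1 + Finsupp.single j 1 ≤ κ) := by
          intro hc
          have h1 := Finsupp.le_def.1 hc j
          rw [apply_add_single_single] at h1
          by_cases hij' : i = j
          · subst hij'
            rw [if_pos rfl] at h1
            omega
          · rw [if_neg hij'] at h1
            rw [if_pos rfl] at h1
            omega
        rw [hrel, if_neg hcond]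
        have : u j = 0 := by simp only [hu, hj, ↓reduceIte]
        rw [this]
        simp
    · have hcond : ¬(α + Finsupp.single i 1 + Finsupp.single j 1 ≤ κ) := by
        intro hc
        have := Finsupp.le_def.1 hc i
        rw [apply_add_single_single] at this
        rw [if_pos rfl] at this
        by_cases hji : j = i
        · subst hji
          rw [if_pos rfl] at this
          omega
        · rw [if_neg hji] at this
          omega
      rw [hrel, if_neg hcond]
      have : u i = 0 := by simp only [hu, hi, ↓reduceIte]
      rw [this]
      simp
  · refine ⟨0, fun v _ => ?_⟩
    rw [quad_sum]
    have hz : ∀ i j, H' i j = 0 := by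
      intro i j
      rw [hrel]
      rw [Finsupp.le_def] at hak
      push_neg at hak
      obtain ⟨p, hp⟩ := hak
      rw [if_neg]
      intro hc
      have h1 := Finsupp.le_def.1 hc p
      have h2 : α p ≤ (α + Finsupp.single i 1 + Finsupp.single j 1 : Fin n →₀ ℕ) p := by
        rw [apply_add_single_single]
        split <;> split <;> omega
      omega
    simp [hz]

lemma KV_truncGE_mat {α κ : Fin n →₀ ℕ} {H H' : Matrix (Fin n) (Fin n) ℝ}
    (hrel : ∀ i j, H' i j
      = if κ ≤ α + Finsupp.single i 1 + Finsupp.single j 1 then H i j else 0)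
    (hH : KV H) : KV H' := by
  by_cases hak : κ ≤ α
  · have : H' = H := by
      ext i j
      rw [hrel, if_pos]
      rw [Finsupp.le_def]
      intro k
      rw [apply_add_single_single]
      have := Finsupp.le_def.1 hak k
      split <;> split <;> omega
    rw [this]
    exact hH
  · rw [Finsupp.le_def] at hak
    push_neg at hak
    obtain ⟨p, hp⟩ := hak
    refine ⟨Pi.single p 1, fun v hv => ?_⟩
    have hvp : v p = 0 := by
      rw [← hv, dotProduct]
      rw [Finset.sum_eq_single p]
      · simp
      · intro b _ hb
        simp [Pi.single_eq_of_ne hb]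
      · simp
    rw [quad_sum]
    have : ∀ i ∈ Finset.univ, ∀ j ∈ Finset.univ, H' i j * (v i * v j) = 0 := by
      intro i _ j _
      rw [hrel]
      split
      · rename_i hc
        have := Finsupp.le_def.1 hc p
        rw [apply_add_single_single] at this
        have hpij : i = p ∨ j = p := by
          by_contra hcon
          push_neg at hcon
          rw [if_neg hcon.1, if_neg hcon.2] at this
          omega
        rcases hpij with rfl | rfl <;> rw [hvp] <;> ring
      · ring
    rw [Finset.sum_congr rfl (fun i hi => Finset.sum_congr rfl (this i hi))]
    simp

/-! ### Truncation coefficients and M-convexity -/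

lemma coeff_truncLE' (κ : Fin n →₀ ℕ) (f : MvPolynomial (Fin n) ℝ) (γ : Fin n →₀ ℕ) :
    coeff γ (truncLE κ f) = if γ ≤ κ then coeff γ f else 0 := by
  rw [truncLE, coeff_sum]
  simp only [coeff_monomial]
  rw [Finset.sum_ite_eq' _ γ (fun β => coeff β f)]
  simp only [Finset.mem_filter, mem_support_iff]
  by_cases h1 : γ ≤ κ <;> by_cases h2 : coeff γ f = 0 <;> simp [h1, h2]

lemma coeff_truncGE' (κ : Fin n →₀ ℕ) (f : MvPolynomial (Fin n) ℝ) (γ : Fin n →₀ ℕ) :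
    coeff γ (truncGE κ f) = if κ ≤ γ then coeff γ f else 0 := by
  rw [truncGE, coeff_sum]
  simp only [coeff_monomial]
  rw [Finset.sum_ite_eq' _ γ (fun β => coeff β f)]
  simp only [Finset.mem_filter, mem_support_iff]
  by_cases h1 : κ ≤ γ <;> by_cases h2 : coeff γ f = 0 <;> simp [h1, h2]

lemma apply_sub_add (a : Fin n →₀ ℕ) (j k i : Fin n) :
    (a - Finsupp.single j 1 + Finsupp.single k 1 : Fin n →₀ ℕ) i
      = a i - (if j = i then 1 else 0) + (if k = i then 1 else 0) := by
  simp only [Finsupp.add_apply, Finsupp.tsub_apply, Finsupp.single_apply]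

lemma mconvex_truncLE {f : MvPolynomial (Fin n) ℝ} {κ : Fin n →₀ ℕ}
    (hC : MConvexSupp {γ | f.coeff γ ≠ 0}) :
    MConvexSupp {γ | (truncLE κ f).coeff γ ≠ 0} := by
  intro a ha b hb j hj
  simp only [Set.mem_setOf_eq, coeff_truncLE'] at ha hb
  have hak : a ≤ κ := by by_contra h; rw [if_neg h] at ha; exact ha rfl
  have hbk : b ≤ κ := by by_contra h; rw [if_neg h] at hb; exact hb rfl
  rw [if_pos hak] at ha
  rw [if_pos hbk] at hb
  obtain ⟨k, hk1, hk2⟩ := hC a ha b hb j hj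
  have hjk : j ≠ k := by
    intro h
    subst h
    omega
  refine ⟨k, hk1, ?_⟩
  simp only [Set.mem_setOf_eq, coeff_truncLE']
  rw [if_pos]
  · exact hk2
  · rw [Finsupp.le_def]
    intro i
    rw [apply_sub_add]
    have h1 := Finsupp.le_def.1 hak i
    have h2 := Finsupp.le_def.1 hbk k
    by_cases hji : j = i
    · subst hji
      rw [if_pos rfl, if_neg (fun h => hjk h.symm)]
      omega
    · by_cases hki : k = i
      · subst hki
        rw [if_neg hji, if_pos rfl]
        omega
      · rw [if_neg hji, if_neg hki]
        omega

lemma mconvex_truncGE {f : MvPolynomial (Fin n) ℝ} {κ : Fin n →₀ ℕ}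
    (hC : MConvexSupp {γ | f.coeff γ ≠ 0}) :
    MConvexSupp {γ | (truncGE κ f).coeff γ ≠ 0} := by
  intro a ha b hb j hj
  simp only [Set.mem_setOf_eq, coeff_truncGE'] at ha hb
  have hak : κ ≤ a := by by_contra h; rw [if_neg h] at ha; exact ha rfl
  have hbk : κ ≤ b := by by_contra h; rw [if_neg h] at hb; exact hb rfl
  rw [if_pos hak] at ha
  rw [if_pos hbk] at hb
  obtain ⟨k, hk1, hk2⟩ := hC a ha b hb j hj
  have hjk : j ≠ k := by
    intro h
    subst h
    omega
  refine ⟨k, hk1, ?_⟩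
  simp only [Set.mem_setOf_eq, coeff_truncGE']
  rw [if_pos]
  · exact hk2
  · rw [Finsupp.le_def]
    intro i
    rw [apply_sub_add]
    have h1 := Finsupp.le_def.1 hak i
    have h2 := Finsupp.le_def.1 hbk j
    by_cases hji : j = i
    · subst hji
      rw [if_pos rfl, if_neg (fun h => hjk h.symm)]
      omega
    · by_cases hki : k = i
      · subst hki
        rw [if_neg hji, if_pos rfl]
        omega
      · rw [if_neg hji, if_neg hki]
        omega

/-! ### Main lemmas -/

lemma lorentzian_truncLE {d : ℕ} {f : MvPolynomial (Fin n) ℝ} (hf : Lorentzian d f)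
    (κ : Fin n →₀ ℕ) : Lorentzian d (truncLE κ f) := by
  refine ⟨?_, ?_, ?_⟩
  · intro γ hγ
    rw [coeff_truncLE'] at hγ
    by_cases h : γ ≤ κ
    · rw [if_pos h] at hγ
      exact hf.1 hγ
    · rw [if_neg h] at hγ
      exact absurd rfl hγ
  · intro γ
    rw [coeff_truncLE']
    split
    · exact hf.2.1 γ
    · exact le_refl 0
  · intro h2d
    obtain ⟨hM, hQ⟩ := hf.2.2 h2d
    refine ⟨mconvex_truncLE hM, fun α hα => ?_⟩
    apply atMostOnePos_of_KV
    have hKV : KV (hessian (pderivPow α f)) :=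
      KV_of_atMostOnePos (hessian_isHermitian _) (hQ α hα)
    refine KV_truncLE_mat (α := α) (κ := κ) (fun i j => ?_) (fun i => ?_) hKV
    · obtain ⟨c, hc, hcg⟩ := hessian_pderivPow α i j
      rw [hcg, hcg, coeff_truncLE', mul_ite, mul_zero]
    · obtain ⟨c, hc, hcg⟩ := hessian_pderivPow α i i
      rw [hcg]
      exact mul_nonneg hc.le (hf.2.1 _)

lemma lorentzian_truncGE {d : ℕ} {f : MvPolynomial (Fin n) ℝ} (hf : Lorentzian d f)
    (κ : Fin n →₀ ℕ) : Lorentzian d (truncGE κ f) := by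
  refine ⟨?_, ?_, ?_⟩
  · intro γ hγ
    rw [coeff_truncGE'] at hγ
    by_cases h : κ ≤ γ
    · rw [if_pos h] at hγ
      exact hf.1 hγ
    · rw [if_neg h] at hγ
      exact absurd rfl hγ
  · intro γ
    rw [coeff_truncGE']
    split
    · exact hf.2.1 γ
    · exact le_refl 0
  · intro h2d
    obtain ⟨hM, hQ⟩ := hf.2.2 h2d
    refine ⟨mconvex_truncGE hM, fun α hα => ?_⟩
    apply atMostOnePos_of_KV
    have hKV : KV (hessian (pderivPow α f)) :=
      KV_of_atMostOnePos (hessian_isHermitian _) (hQ α hα)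
    refine KV_truncGE_mat (α := α) (κ := κ) (fun i j => ?_) hKV
    · obtain ⟨c, hc, hcg⟩ := hessian_pderivPow α i j
      rw [hcg, hcg, coeff_truncGE', mul_ite, mul_zero]

end Aux

/-- Truncations of Lorentzian polynomials are Lorentzian. -/
theorem stmt_14 (f g : MvPolynomial (Fin n) ℝ) (d e : ℕ)
    (hf : Lorentzian d f) (hg : Lorentzian e g) (κ : Fin n →₀ ℕ) :
    Lorentzian d (truncLE κ f) ∧ Lorentzian d (truncGE κ f) ∧
    Lorentzian e (truncLE κ g) ∧ Lorentzian e (truncGE κ g) :=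
  ⟨lorentzian_truncLE hf κ, lorentzian_truncGE hf κ,
   lorentzian_truncLE hg κ, lorentzian_truncGE hg κ⟩
end
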